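/- arXiv:2307.04628 — 3 statements merged into one kernel-verified Lean document; each statement's English description precedes it below -/
import Mathlib

section
/- Let k ∈ ℕ, let H be a k-labeled graph, and let i, a, b ∈ Fin k with a ≠ b. Assume no operator occurrence on the left-hand side is useless (in particular H has at least two vertices of label i and η_{a,b} creates a new edge in H). Then θ_i(η_{a,b}(H)) = η_{a,b}(θ_i(H)) as k-labeled graphs, up to label-preserving isomorphism. -/
/-! ### `k`-labeled graphs and the basic operations on them -/

/-- A `k`-labeled graph: a simple graph together with a labeling of its vertices
by labels from `Fin k`. -/
structure LGraph (k : ℕ) where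
  V : Type
  G : SimpleGraph V
  lab : V → Fin k

namespace LGraph

variable {k : ℕ}

/-- The join operation `η_{a,b}`: add all edges between vertices of label `a`
and vertices of label `b`. -/
def join (a b : Fin k) (H : LGraph k) : LGraph k where
  V := H.V
  G :=
    { Adj := fun u v =>
        H.G.Adj u v ∨ (u ≠ v ∧ ((H.lab u = a ∧ H.lab v = b) ∨ (H.lab u = b ∧ H.lab v = a)))
      symm := by
        constructor
        intro u v h
        rcases h with h | ⟨hne, h⟩
        · exact Or.inl (H.G.symm.symm _ _ h)
        · refine Or.inr ⟨hne.symm, ?_⟩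
          rcases h with ⟨h1, h2⟩ | ⟨h1, h2⟩
          · exact Or.inr ⟨h2, h1⟩
          · exact Or.inl ⟨h2, h1⟩
      loopless := by
        constructor
        intro v h
        rcases h with h | ⟨hne, _⟩
        · exact H.G.loopless.irrefl v h
        · exact hne rfl }
  lab := H.lab

/-- The relabel operation `ρ_{a→b}`: every vertex of label `a` gets label `b` instead. -/
def relabel (a b : Fin k) (H : LGraph k) : LGraph k where
  V := H.V
  G := H.G
  lab := fun v => if H.lab v = a then b else H.lab v

/-- The fuse operation `θ_i`: replace all vertices of label `i` by a single new vertex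
(represented by `none`) of label `i` whose neighbourhood is the union of their
neighbourhoods. -/
def fuse (i : Fin k) (H : LGraph k) : LGraph k where
  V := Option {v : H.V // H.lab v ≠ i}
  G :=
    { Adj := fun x y =>
        match x, y with
        | some u, some v => H.G.Adj u.1 v.1
        | some u, none => ∃ w, H.lab w = i ∧ H.G.Adj u.1 w
        | none, some v => ∃ w, H.lab w = i ∧ H.G.Adj w v.1
        | none, none => False
      symm := by
        constructor
        rintro (_ | u) (_ | v) h
        · exact h
        · obtain ⟨w, hw, ha⟩ := h
          exact ⟨w, hw, ha.symm⟩
        · obtain ⟨w, hw, ha⟩ := h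
          exact ⟨w, hw, ha.symm⟩
        · exact H.G.symm.symm _ _ h
      loopless := by
        constructor
        rintro (_ | v) h
        · exact h
        · exact H.G.loopless.irrefl v.1 h }
  lab := fun x =>
    match x with
    | some u => H.lab u.1
    | none => i

/-- Disjoint union `H1 ⊕ H2` of two `k`-labeled graphs. -/
def union (H1 H2 : LGraph k) : LGraph k where
  V := H1.V ⊕ H2.V
  G := H1.G ⊕g H2.G
  lab := Sum.elim H1.lab H2.lab

/-- Label-preserving isomorphism of `k`-labeled graphs. -/
def LIso (H1 H2 : LGraph k) : Prop :=
  ∃ e : H1.G ≃g H2.G, ∀ v, H2.lab (e v) = H1.lab v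

/-- The occurrence of the join operator `η_{a,b}` applied to `H` is not useless,
i.e. it creates at least one new edge. -/
def joinUseful (a b : Fin k) (H : LGraph k) : Prop :=
  ∃ u v : H.V, u ≠ v ∧ H.lab u = a ∧ H.lab v = b ∧ ¬ H.G.Adj u v

/-- The occurrence of the fuse operator `θ_i` applied to `H` is not useless,
i.e. `H` has at least two vertices of label `i`. -/
def fuseUseful (i : Fin k) (H : LGraph k) : Prop :=
  ∃ u v : H.V, u ≠ v ∧ H.lab u = i ∧ H.lab v = i

/-- The occurrence of a relabel operator `ρ_{a→b}` applied to `H` is not useless,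
i.e. `H` has a vertex of label `a`. -/
def relabelUseful (a : Fin k) (H : LGraph k) : Prop :=
  ∃ v : H.V, H.lab v = a

/-- `relabelSeq i [a₁, …, a_q] H = ρ_{a₁→i}(⋯(ρ_{a_q→i}(H))⋯)`. -/
def relabelSeq (i : Fin k) : List (Fin k) → LGraph k → LGraph k
  | [], H => H
  | a :: as, H => relabel a i (relabelSeq i as H)

/-- None of the relabel operators in `relabelSeq i as H` is useless (this includes
that none of them has the form `ρ_{a→a}`). -/
def relabelSeqUseful (i : Fin k) : List (Fin k) → LGraph k → Prop
  | [], _ => True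
  | a :: as, H => relabelSeqUseful i as H ∧ a ≠ i ∧ relabelUseful a (relabelSeq i as H)

end LGraph

open LGraph

/-- rule 1: `θ_i(η_{a,b}(H)) = η_{a,b}(θ_i(H))` provided that no
operator occurrence on the left-hand side is useless. -/
theorem fuse_join_comm {k : ℕ} (H : LGraph k) (i a b : Fin k) (hab : a ≠ b)
    (hjoin : joinUseful a b H)
    (hfuse : fuseUseful i (join a b H)) :
    LIso (fuse i (join a b H)) (join a b (fuse i H)) := by
  obtain ⟨x, y, hxy, hx, hy⟩ := hfuse
  refine ⟨⟨Equiv.refl _, ?_⟩, fun v => by cases v <;> rfl⟩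
  rintro (_ | ⟨u, hu⟩) (_ | ⟨v, hv⟩) <;>
    simp only [Equiv.refl_apply, fuse, join] <;> dsimp
  · exact ⟨fun h => h.elim id (fun h' => h'.1 rfl), False.elim⟩
  · constructor
    · rintro (⟨w, hw, hadj⟩ | ⟨-, hl⟩)
      · exact ⟨w, hw, Or.inl hadj⟩
      · rcases hl with ⟨h1, h2⟩ | ⟨h1, h2⟩
        · exact ⟨x, hx, Or.inr ⟨fun he => hv ((congrArg H.lab he).symm.trans hx),
            Or.inl ⟨hx.trans h1, h2⟩⟩⟩
        · exact ⟨x, hx, Or.inr ⟨fun he => hv ((congrArg H.lab he).symm.trans hx),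
            Or.inr ⟨hx.trans h1, h2⟩⟩⟩
    · rintro ⟨w, hw, (hadj | ⟨hne, hl⟩)⟩
      · exact Or.inl ⟨w, hw, hadj⟩
      · refine Or.inr ⟨(fun h => Option.some_ne_none (⟨v, hv⟩ : {w : H.V // ¬H.lab w = i}) h.symm), ?_⟩
        rcases hl with ⟨h1, h2⟩ | ⟨h1, h2⟩
        · exact Or.inl ⟨hw.symm.trans h1, h2⟩
        · exact Or.inr ⟨hw.symm.trans h1, h2⟩
  · constructor
    · rintro (⟨w, hw, hadj⟩ | ⟨-, hl⟩)
      · exact ⟨w, hw, Or.inl hadj⟩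
      · rcases hl with ⟨h1, h2⟩ | ⟨h1, h2⟩
        · exact ⟨x, hx, Or.inr ⟨fun he => hu ((congrArg H.lab he).trans hx),
            Or.inl ⟨h1, hx.trans h2⟩⟩⟩
        · exact ⟨x, hx, Or.inr ⟨fun he => hu ((congrArg H.lab he).trans hx),
            Or.inr ⟨h1, hx.trans h2⟩⟩⟩
    · rintro ⟨w, hw, (hadj | ⟨hne, hl⟩)⟩
      · exact Or.inl ⟨w, hw, hadj⟩
      · refine Or.inr ⟨(fun h => Option.some_ne_none (⟨u, hu⟩ : {w : H.V // ¬H.lab w = i}) h), ?_⟩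
        rcases hl with ⟨h1, h2⟩ | ⟨h1, h2⟩
        · exact Or.inl ⟨h1, hw.symm.trans h2⟩
        · exact Or.inr ⟨h1, hw.symm.trans h2⟩
  · exact or_congr Iff.rfl (and_congr ⟨fun h e => h (by cases e; rfl), fun h e => h (by have e' : some (⟨u, hu⟩ : {w : H.V // ¬H.lab w = i}) = some ⟨v, hv⟩ := e; cases e'; rfl)⟩ Iff.rfl)
end

section
/- Let k, q ∈ ℕ, let H be a k-labeled graph, and let i, a, b, a_1, …, a_q ∈ Fin k with a ≠ b and a, b ∈ {a_1, …, a_q, i}. Assume no operator occurrence on the left-hand side is useless. Then θ_i(ρ_{a_1→i}(⋯ ρ_{a_q→i}(η_{a,b}(H)) ⋯)) = θ_i(ρ_{a_1→i}(⋯ ρ_{a_q→i}(H) ⋯)) as k-labeled graphs, up to label-preserving isomorphism. -/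
open LGraph

/-- The label-map realized by `relabelSeq`. -/
def mapLab {k : ℕ} (i : Fin k) : List (Fin k) → Fin k → Fin k
  | [], c => c
  | a :: as, c => if mapLab i as c = a then i else mapLab i as c

lemma mapLab_or {k : ℕ} (i : Fin k) (as : List (Fin k)) (c : Fin k) :
    mapLab i as c = c ∨ mapLab i as c = i := by
  induction as with
  | nil => exact Or.inl rfl
  | cons x as ih =>
    simp only [mapLab]
    split
    · exact Or.inr rfl
    · exact ih

lemma mapLab_eq_i {k : ℕ} (i : Fin k) (as : List (Fin k)) (c : Fin k)
    (h : c ∈ as ∨ c = i) : mapLab i as c = i := by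
  induction as with
  | nil =>
    rcases h with h | h
    · simp at h
    · simpa [mapLab] using h
  | cons x as ih =>
    simp only [mapLab]
    rcases h with h | h
    · rcases List.mem_cons.mp h with rfl | h
      · rcases mapLab_or i as c with h2 | h2 <;> simp [h2]
      · simp [ih (Or.inl h)]
    · simp [ih (Or.inr h)]

lemma relabelSeq_eq {k : ℕ} (i : Fin k) (as : List (Fin k)) (H : LGraph k) :
    relabelSeq i as H = ⟨H.V, H.G, fun v => mapLab i as (H.lab v)⟩ := by
  induction as with
  | nil => rfl
  | cons a as ih => simp only [relabelSeq, ih]; rfl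

lemma fuse_liso_of_adj_iff {k : ℕ} (i : Fin k) {V : Type} (G1 G2 : SimpleGraph V)
    (lab : V → Fin k)
    (h : ∀ u v, lab u ≠ i → (G1.Adj u v ↔ G2.Adj u v)) :
    LIso (fuse i ⟨V, G1, lab⟩) (fuse i ⟨V, G2, lab⟩) := by
  have h' : ∀ u v, lab v ≠ i → (G1.Adj u v ↔ G2.Adj u v) := by
    intro u v hv
    rw [SimpleGraph.adj_comm, h v u hv, SimpleGraph.adj_comm]
  refine ⟨⟨Equiv.refl _, ?_⟩, fun v => by cases v <;> rfl⟩
  rintro (_ | u) (_ | v)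
  · exact Iff.rfl
  · show (∃ w, lab w = i ∧ G2.Adj w v.1) ↔ (∃ w, lab w = i ∧ G1.Adj w v.1)
    exact exists_congr fun w => and_congr_right fun _ => (h' w v.1 v.2).symm
  · show (∃ w, lab w = i ∧ G2.Adj u.1 w) ↔ (∃ w, lab w = i ∧ G1.Adj u.1 w)
    exact exists_congr fun w => and_congr_right fun _ => (h u.1 w u.2).symm
  · exact (h u.1 v.1 u.2).symm

/-- rule 3: if `a, b ∈ {a₁, …, a_q, i}`, then
`θ_i(ρ_{a₁→i}(⋯ρ_{a_q→i}(η_{a,b}(H))⋯)) = θ_i(ρ_{a₁→i}(⋯ρ_{a_q→i}(H)⋯))` provided that no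
operator occurrence on the left-hand side is useless. -/
theorem fuse_relabelSeq_join_absorb {k : ℕ} (H : LGraph k) (i a b : Fin k)
    (as : List (Fin k)) (hab : a ≠ b)
    (ha : a ∈ as ∨ a = i) (hb : b ∈ as ∨ b = i)
    (hjoin : joinUseful a b H)
    (hseq : relabelSeqUseful i as (join a b H))
    (hfuse : fuseUseful i (relabelSeq i as (join a b H))) :
    LIso (fuse i (relabelSeq i as (join a b H)))
         (fuse i (relabelSeq i as H)) := by
  rw [relabelSeq_eq, relabelSeq_eq]
  have key : ∀ u v : H.V, mapLab i as (H.lab u) ≠ i →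
      ((join a b H).G.Adj u v ↔ H.G.Adj u v) := by
    intro u v hu
    have h1 : H.lab u ≠ a := fun h => hu (by rw [h]; exact mapLab_eq_i i as a ha)
    have h2 : H.lab u ≠ b := fun h => hu (by rw [h]; exact mapLab_eq_i i as b hb)
    constructor
    · rintro (h | ⟨_, ⟨ha', _⟩ | ⟨hb', _⟩⟩)
      · exact h
      · exact absurd ha' h1
      · exact absurd hb' h2
    · exact Or.inl
  exact fuse_liso_of_adj_iff i (join a b H).G H.G (fun v => mapLab i as (H.lab v)) key
end

section
/- Let k ∈ ℕ, let H be a k-labeled graph, and let i, j, a ∈ Fin k be pairwise distinct. Assume no operator occurrence on the left-hand side is useless. Then η_{i,j}(ρ_{a→i}(H)) = ρ_{a→i}(η_{i,j}(η_{a,j}(H))) as k-labeled graphs, up to label-preserving isomorphism. -/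
open LGraph

/-- rule 13: for pairwise distinct `i, j, a`,
`η_{i,j}(ρ_{a→i}(H)) = ρ_{a→i}(η_{i,j}(η_{a,j}(H)))` provided that no operator
occurrence on the left-hand side is useless. -/
theorem join_relabel_comm {k : ℕ} (H : LGraph k) (i j a : Fin k)
    (hij : i ≠ j) (hia : i ≠ a) (hja : j ≠ a)
    (hrel : relabelUseful a H)
    (hjoin : joinUseful i j (relabel a i H)) :
    LIso (join i j (relabel a i H))
         (relabel a i (join i j (join a j H))) := by
  refine ⟨⟨Equiv.refl _, ?_⟩, fun v => rfl⟩
  intro u v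
  change (join i j (join a j H)).G.Adj u v ↔ (join i j (relabel a i H)).G.Adj u v
  simp only [join, relabel, Equiv.refl_apply]
  by_cases hu : H.lab u = a <;> by_cases hv : H.lab v = a <;>
    simp [hu, hv, hia, hja, hij, hia.symm, hja.symm, hij.symm, Ne.symm hia,
      Ne.symm hja, Ne.symm hij] <;> tauto
end
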